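/- For all real numbers x, t with 0 < x ≤ 0.6 and x ≤ t ≤ 1, one has F(x,t) ≤ (1/2)·x·t·(1 − x/t + log(x/t)) + x²·t − (1/2)·x·t² − (1/6)·x·t³ + (1/4)·(1 − (2−t)³/3)·x³. -/

import Mathlib

/-- `log (1-x) ≤ -x - x²/2 - x³/3` for `0 ≤ x < 1`. -/
lemma logB (x : ℝ) (h0 : 0 ≤ x) (h1 : x < 1) :
    Real.log (1 - x) ≤ -x - x ^ 2 / 2 - x ^ 3 / 3 := by
  set f : ℝ → ℝ := fun y => -y - y ^ 2 / 2 - y ^ 3 / 3 - Real.log (1 - y) with hf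
  have key : ∀ y ∈ Set.Ioo (0:ℝ) x, 0 ≤ deriv f y := by
    intro y hy
    have hy1 : y < 1 := lt_trans hy.2 h1
    have hne : (1 : ℝ) - y ≠ 0 := by linarith [hy.1]
    have hpos : (0:ℝ) < 1 - y := by linarith
    have hlog : HasDerivAt (fun y : ℝ => Real.log (1 - y)) ((1 - y)⁻¹ * (-1)) y := by
      have h1' : HasDerivAt (fun y : ℝ => 1 - y) (-1) y := by
        simpa using (hasDerivAt_id y).const_sub 1
      exact (Real.hasDerivAt_log hne).comp y h1'
    have hder : HasDerivAt f (-1 - 2 * y / 2 - 3 * y ^ 2 / 3 - (1 - y)⁻¹ * (-1)) y := by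
      have hp : HasDerivAt (fun y : ℝ => -y - y ^ 2 / 2 - y ^ 3 / 3)
          (-1 - 2 * y / 2 - 3 * y ^ 2 / 3) y := by
        have := (((hasDerivAt_id y).neg).sub (((hasDerivAt_pow 2 y).div_const 2))).sub
          ((hasDerivAt_pow 3 y).div_const 3)
        exact this.congr_deriv (by norm_num <;> ring)
      exact hp.sub hlog
    rw [hder.deriv]
    have hinv : 1 + y + y ^ 2 ≤ (1 - y)⁻¹ := by
      rw [inv_eq_one_div, le_div_iff₀ hpos]
      nlinarith [pow_nonneg hy.1.le 3]
    nlinarith [hy.1.le]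
  have hcont : ContinuousOn f (Set.Icc 0 x) := by
    apply ContinuousOn.sub
    · fun_prop
    · apply ContinuousOn.log
      · fun_prop
      · intro y hy
        have : y < 1 := lt_of_le_of_lt hy.2 h1
        intro hc; linarith [sub_eq_zero.mp hc]
  have hmono : MonotoneOn f (Set.Icc 0 x) := by
    apply monotoneOn_of_deriv_nonneg (convex_Icc 0 x) hcont
    · intro y hy
      rw [interior_Icc] at hy
      have hne : (1 : ℝ) - y ≠ 0 := by
        have : y < 1 := lt_trans hy.2 h1
        intro h; linarith [sub_eq_zero.mp h]
      apply DifferentiableAt.differentiableWithinAt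
      apply DifferentiableAt.sub
      · fun_prop
      · exact (Real.differentiableAt_log hne).comp y (by fun_prop)
    · intro y hy
      rw [interior_Icc] at hy
      exact key y hy
  have h00 : f 0 ≤ f x := hmono (Set.left_mem_Icc.mpr h0) (Set.right_mem_Icc.mpr h0) h0
  have : f 0 = 0 := by simp [hf]
  rw [this] at h00
  simp only [hf] at h00
  linarith

/-- `-(1-u) log(1-u) ≤ u - u²/2 - u³/6` for `0 ≤ u ≤ 1`. -/
lemma cubeH (u : ℝ) (h0 : 0 ≤ u) (h1 : u ≤ 1) :
    -((1 - u) * Real.log (1 - u)) ≤ u - u ^ 2 / 2 - u ^ 3 / 6 := by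
  rcases eq_or_lt_of_le h1 with h | h
  · subst h  -- wrong direction maybe
    norm_num
  set g : ℝ → ℝ := fun y => y - y ^ 2 / 2 - y ^ 3 / 6 + (1 - y) * Real.log (1 - y) with hg
  have key : ∀ y ∈ Set.Ioo (0:ℝ) u, 0 ≤ deriv g y := by
    intro y hy
    have hy1 : y < 1 := lt_trans hy.2 h
    have hne : (1 : ℝ) - y ≠ 0 := by linarith
    have hpos : (0:ℝ) < 1 - y := by linarith
    have hlog : HasDerivAt (fun y : ℝ => Real.log (1 - y)) ((1 - y)⁻¹ * (-1)) y := by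
      have h1' : HasDerivAt (fun y : ℝ => 1 - y) (-1) y := by
        simpa using (hasDerivAt_id y).const_sub 1
      exact (Real.hasDerivAt_log hne).comp y h1'
    have hmul : HasDerivAt (fun y : ℝ => (1 - y) * Real.log (1 - y))
        ((-1) * Real.log (1 - y) + (1 - y) * ((1 - y)⁻¹ * (-1))) y := by
      have h1' : HasDerivAt (fun y : ℝ => 1 - y) (-1) y := by
        simpa using (hasDerivAt_id y).const_sub 1
      exact h1'.mul hlog
    have hder : HasDerivAt g
        (1 - 2 * y / 2 - 3 * y ^ 2 / 6 + ((-1) * Real.log (1 - y) + (1 - y) * ((1 - y)⁻¹ * (-1)))) y := by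
      have hp : HasDerivAt (fun y : ℝ => y - y ^ 2 / 2 - y ^ 3 / 6)
          (1 - 2 * y / 2 - 3 * y ^ 2 / 6) y := by
        have := (((hasDerivAt_id y).sub ((hasDerivAt_pow 2 y).div_const 2))).sub
          ((hasDerivAt_pow 3 y).div_const 6)
        exact this.congr_deriv (by norm_num <;> ring)
      exact hp.add hmul
    rw [hder.deriv]
    have hsimp : (1 - y) * ((1 - y)⁻¹ * (-1)) = -1 := by field_simp
    rw [hsimp]
    have hlb := logB y hy.1.le hy1
    nlinarith [pow_nonneg hy.1.le 3]
  have hcont : ContinuousOn g (Set.Icc 0 u) := by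
    apply ContinuousOn.add
    · fun_prop
    · apply ContinuousOn.mul
      · fun_prop
      · apply ContinuousOn.log
        · fun_prop
        · intro y hy
          have : y < 1 := lt_of_le_of_lt hy.2 h
          intro hc; linarith [sub_eq_zero.mp hc]
  have hmono : MonotoneOn g (Set.Icc 0 u) := by
    apply monotoneOn_of_deriv_nonneg (convex_Icc 0 u) hcont
    · intro y hy
      rw [interior_Icc] at hy
      have hne : (1 : ℝ) - y ≠ 0 := by
        have : y < 1 := lt_trans hy.2 h
        intro hc; linarith [sub_eq_zero.mp hc]
      apply DifferentiableAt.differentiableWithinAt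
      apply DifferentiableAt.add
      · fun_prop
      · exact (differentiableAt_const (1:ℝ)).sub (differentiableAt_id) |>.mul
          ((Real.differentiableAt_log hne).comp y (by fun_prop))
    · intro y hy
      rw [interior_Icc] at hy
      exact key y hy
  have h00 : g 0 ≤ g u := hmono (Set.left_mem_Icc.mpr h0) (Set.right_mem_Icc.mpr h0) h0
  have : g 0 = 0 := by simp [hg]
  rw [this] at h00
  simp only [hg] at h00
  linarith


/-- `h x = -x log x` (with `h 0 = 0`, since `Real.log 0 = 0`). -/
noncomputable def entH (x : ℝ) : ℝ := -x * Real.log x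

/-- `H x = h x + h (1 - x)`. -/
noncomputable def entHH (x : ℝ) : ℝ := entH x + entH (1 - x)

/-- The rate function `F(x,t)`. -/
noncomputable def entF (x t : ℝ) : ℝ :=
  (1 / 2) * entH (t * x) + entH ((1 - t) * x) + (1 / 2) * entH (1 - (2 - t) * x) - entHH x

theorem stmt_17 (x t : ℝ) (hx : 0 < x) (hx6 : x ≤ 0.6) (hxt : x ≤ t) (ht : t ≤ 1) :
    entF x t ≤ (1 / 2) * x * t * (1 - x / t + Real.log (x / t))
      + x ^ 2 * t - (1 / 2) * x * t ^ 2 - (1 / 6) * x * t ^ 3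
      + (1 / 4) * (1 - (2 - t) ^ 3 / 3) * x ^ 3 := by
  have ht0 : 0 < t := lt_of_lt_of_le hx hxt
  have hx1 : x < 1 := by norm_num at hx6 ⊢; linarith
  have hu0 : 0 ≤ (2 - t) * x := by nlinarith
  have hu1 : (2 - t) * x < 1 := by nlinarith [sq_nonneg (1 - x)]
  have e1 : entH (t * x) = -(t * x) * (Real.log t + Real.log x) := by
    rw [entH, Real.log_mul ht0.ne' hx.ne']
  have e2 : entH ((1 - t) * x) = -((1 - t) * x) * (Real.log (1 - t) + Real.log x) := by
    rcases eq_or_lt_of_le ht with h | h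
    · rw [← h]; simp [entH]
    · rw [entH, Real.log_mul (by intro hc; linarith [sub_eq_zero.mp hc]) hx.ne']
  have e6 : Real.log (x / t) = Real.log x - Real.log t := Real.log_div hx.ne' ht0.ne'
  have F1 : -((1 - (2 - t) * x) * Real.log (1 - (2 - t) * x)) ≤
      (2 - t) * x - ((2 - t) * x) ^ 2 / 2 - ((2 - t) * x) ^ 3 / 6 :=
    cubeH _ hu0 hu1.le
  have F2 : -((1 - t) * Real.log (1 - t)) ≤ t - t ^ 2 / 2 - t ^ 3 / 6 :=
    cubeH t ht0.le ht
  have F3 : Real.log (1 - x) ≤ -x - x ^ 2 / 2 - x ^ 3 / 3 := logB x hx.le hx1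
  have F2' : x * -((1 - t) * Real.log (1 - t)) ≤ x * (t - t ^ 2 / 2 - t ^ 3 / 6) :=
    mul_le_mul_of_nonneg_left F2 hx.le
  have F3' : (1 - x) * Real.log (1 - x) ≤ (1 - x) * (-x - x ^ 2 / 2 - x ^ 3 / 3) :=
    mul_le_mul_of_nonneg_left F3 (by linarith)
  have h1 : 0 ≤ x ^ 2 * ((t - x) * (t + x)) :=
    mul_nonneg (sq_nonneg x) (mul_nonneg (by linarith) (by linarith))
  have h2 : 0 ≤ x ^ 3 * (1 - x) :=
    mul_nonneg (pow_nonneg hx.le 3) (by linarith)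
  have e7 : (1 / 2) * x * t * (1 - x / t + (Real.log x - Real.log t))
      = 1 / 2 * x * t - 1 / 2 * x ^ 2 + 1 / 2 * x * t * (Real.log x - Real.log t) := by
    field_simp
  rw [entF, entHH, e1, e2, entH, entH, entH, e6, e7]
  nlinarith [F1, F2', F3', h1, h2]
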